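/- For a CNF formula Φ = (V, C) with n = |V| variables and |C| ≤ nd clauses, it holds that Z(θ_0)/Z(θ_1) ≤ e and Z(θ_{ℓ+1}) ≤ Z(θ_ℓ) for every ℓ ≥ 0; consequently, the random variable W = 2^n·Π_{i=1}^{ℓ} W_i (with W_i as in the annealing schedule, mutually independent) satisfies Var(W)/E[W]² = Z(θ_{ℓ+1})·Z(θ_0)/(Z(θ_ℓ)·Z(θ_1)) − 1 ≤ e − 1. -/

import Mathlib

open Finset

/-- A clause over variable set `V`. -/
structure Clause (V : Type) where
  vars : Finset V
  sign : V → Bool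

/-- A clause is satisfied by an assignment iff some variable of the clause is
assigned the polarity of its literal. -/
def Clause.sat {V : Type} (c : Clause V) (X : V → Bool) : Prop :=
  ∃ v ∈ c.vars, X v = c.sign v

instance {V : Type} (c : Clause V) (X : V → Bool) : Decidable (c.sat X) :=
  inferInstanceAs (Decidable (∃ v ∈ c.vars, X v = c.sign v))

/-- `|F(X)|`: the number of clauses not satisfied by the assignment `X`. -/
def numUnsat {V ι : Type} [Fintype ι] (cl : ι → Clause V) (X : V → Bool) : ℕ :=
  (Finset.univ.filter fun i => ¬ (cl i).sat X).card

/-- The weight `w_θ(X) = exp(−θ·|F(X)|)`. -/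
noncomputable def wt {V ι : Type} [Fintype ι] (cl : ι → Clause V) (θ : ℝ)
    (X : V → Bool) : ℝ :=
  Real.exp (-θ * numUnsat cl X)

/-- The partition function `Z(θ) = Σ_{X ∈ {0,1}^V} w_θ(X)`. -/
noncomputable def partZ {V ι : Type} [Fintype V] [DecidableEq V] [Fintype ι]
    (cl : ι → Clause V) (θ : ℝ) : ℝ :=
  ∑ X : V → Bool, wt cl θ X

/-- The expectation `E[W_i]` of the random variable `W_i = w_{θcur}(X)/w_{θprev}(X)`
where `X ∼ μ_{θprev}`. -/
noncomputable def EW {V ι : Type} [Fintype V] [DecidableEq V] [Fintype ι]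
    (cl : ι → Clause V) (θprev θcur : ℝ) : ℝ :=
  ∑ X : V → Bool, (wt cl θprev X / partZ cl θprev) * (wt cl θcur X / wt cl θprev X)

/-- The second moment `E[W_i²]` of the random variable `W_i = w_{θcur}(X)/w_{θprev}(X)`
where `X ∼ μ_{θprev}`. -/
noncomputable def EW2 {V ι : Type} [Fintype V] [DecidableEq V] [Fintype ι]
    (cl : ι → Clause V) (θprev θcur : ℝ) : ℝ :=
  ∑ X : V → Bool, (wt cl θprev X / partZ cl θprev) * (wt cl θcur X / wt cl θprev X) ^ 2

section Aux

variable {V ι : Type} [Fintype V] [DecidableEq V] [Fintype ι]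

lemma wt_pos (cl : ι → Clause V) (θ : ℝ) (X : V → Bool) : 0 < wt cl θ X :=
  Real.exp_pos _

lemma partZ_pos (cl : ι → Clause V) (θ : ℝ) : 0 < partZ cl θ :=
  Finset.sum_pos (fun X _ => wt_pos cl θ X) Finset.univ_nonempty

lemma partZ_anti (cl : ι → Clause V) {a b : ℝ} (hab : a ≤ b) :
    partZ cl b ≤ partZ cl a := by
  refine Finset.sum_le_sum fun X _ => Real.exp_le_exp.2 ?_
  have : (0:ℝ) ≤ (numUnsat cl X : ℝ) := Nat.cast_nonneg _
  nlinarith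

lemma wt_sq_div (cl : ι → Clause V) (a b : ℝ) (X : V → Bool) :
    wt cl b X ^ 2 / wt cl a X = wt cl (2 * b - a) X := by
  rw [wt, wt, wt, sq, ← Real.exp_add, ← Real.exp_sub]
  congr 1; ring

lemma EW_eq (cl : ι → Clause V) (a b : ℝ) :
    EW cl a b = partZ cl b / partZ cl a := by
  have h : EW cl a b = (∑ X : V → Bool, wt cl b X) / partZ cl a := by
    rw [EW, Finset.sum_div]
    refine Finset.sum_congr rfl fun X _ => ?_
    have h := (wt_pos cl a X).ne'
    have hZ := (partZ_pos cl a).ne'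
    field_simp
  rw [h]; rfl

lemma EW2_eq (cl : ι → Clause V) (a b : ℝ) :
    EW2 cl a b = partZ cl (2 * b - a) / partZ cl a := by
  have h : EW2 cl a b = (∑ X : V → Bool, wt cl (2 * b - a) X) / partZ cl a := by
    rw [EW2, Finset.sum_div]
    refine Finset.sum_congr rfl fun X _ => ?_
    rw [← wt_sq_div cl a b X]
    have h := (wt_pos cl a X).ne'
    have hZ := (partZ_pos cl a).ne'
    field_simp
  rw [h]; rfl

end Aux

/-- For a CNF formula `Φ = (V, C)` with `n = |V|` variables and
`|C| ≤ nd` clauses, `Z(θ_0)/Z(θ_1) ≤ e` and `Z(θ_{ℓ+1}) ≤ Z(θ_ℓ)` for every `ℓ ≥ 0`;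
consequently the random variable `W = 2^n·Π_{i=1}^ℓ W_i` (with the `W_i` mutually
independent, so that `E[W] = 2^n·Π E[W_i]` and `E[W²] = 4^n·Π E[W_i²]`) satisfies
`Var(W)/E[W]² = Z(θ_{ℓ+1})·Z(θ_0)/(Z(θ_ℓ)·Z(θ_1)) − 1 ≤ e − 1`. -/
theorem stmt_12 {V ι : Type} [Fintype V] [DecidableEq V] [Fintype ι]
    (cl : ι → Clause V) (d : ℕ)
    (hdeg : ∀ v : V, (Finset.univ.filter fun i => v ∈ (cl i).vars).card ≤ d)
    (hC : Fintype.card ι ≤ Fintype.card V * d)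
    (θ : ℕ → ℝ) (hθ : ∀ i : ℕ, θ i = (i : ℝ) / (d * Fintype.card V)) :
    partZ cl (θ 0) / partZ cl (θ 1) ≤ Real.exp 1 ∧
    (∀ ℓ : ℕ, partZ cl (θ (ℓ + 1)) ≤ partZ cl (θ ℓ)) ∧
    ∀ ℓ : ℕ,
      ((4 ^ Fintype.card V * ∏ i ∈ Finset.Icc 1 ℓ, EW2 cl (θ (i - 1)) (θ i)) -
            (2 ^ Fintype.card V * ∏ i ∈ Finset.Icc 1 ℓ, EW cl (θ (i - 1)) (θ i)) ^ 2) /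
          (2 ^ Fintype.card V * ∏ i ∈ Finset.Icc 1 ℓ, EW cl (θ (i - 1)) (θ i)) ^ 2
        = partZ cl (θ (ℓ + 1)) * partZ cl (θ 0) / (partZ cl (θ ℓ) * partZ cl (θ 1)) - 1
      ∧ partZ cl (θ (ℓ + 1)) * partZ cl (θ 0) / (partZ cl (θ ℓ) * partZ cl (θ 1)) - 1
          ≤ Real.exp 1 - 1 := by
  classical
  set n := Fintype.card V with hn
  have hZpos : ∀ x : ℝ, 0 < partZ cl x := fun x => partZ_pos cl x
  -- θ is monotone and θ 0 = 0
  have hθ0 : θ 0 = 0 := by rw [hθ]; simp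
  have hθmono : ∀ k : ℕ, θ k ≤ θ (k + 1) := by
    intro k
    rw [hθ, hθ]
    have hD : (0:ℝ) ≤ (d:ℝ) * n := by positivity
    rcases hD.eq_or_lt with h | h
    · rw [← h]; simp
    · have hk : ((k:ℕ):ℝ) ≤ ((k+1:ℕ):ℝ) := by push_cast; linarith
      gcongr
  have hanti : ∀ ℓ : ℕ, partZ cl (θ (ℓ + 1)) ≤ partZ cl (θ ℓ) :=
    fun ℓ => partZ_anti cl (hθmono ℓ)
  -- Z(θ0) ≤ e * Z(θ1)
  have hZ01 : partZ cl (θ 0) ≤ Real.exp 1 * partZ cl (θ 1) := by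
    rw [partZ, partZ, Finset.mul_sum]
    refine Finset.sum_le_sum fun X _ => ?_
    rw [wt, wt, hθ0, ← Real.exp_add]
    refine Real.exp_le_exp.2 ?_
    have hm : (numUnsat cl X : ℝ) ≤ (d : ℝ) * n := by
      have h1 : numUnsat cl X ≤ Fintype.card ι := by
        simpa [numUnsat] using Finset.card_filter_le Finset.univ fun i => ¬ (cl i).sat X
      have := h1.trans hC
      push_cast
      calc (numUnsat cl X : ℝ) ≤ (n * d : ℕ) := by exact_mod_cast this
        _ = (d:ℝ) * n := by push_cast; ring
    rw [hθ 1]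
    have hD : (0:ℝ) ≤ (d:ℝ) * n := by positivity
    have hfrac : ((1:ℕ):ℝ) / ((d:ℝ) * n) * (numUnsat cl X) ≤ 1 := by
      rcases hD.eq_or_lt with h | h
      · rw [← h]; simp
      · rw [Nat.cast_one, div_mul_eq_mul_div, one_mul, div_le_one h]; exact hm
    push_cast at hfrac ⊢
    linarith
  have hZ01' : partZ cl (θ 0) / partZ cl (θ 1) ≤ Real.exp 1 := by
    rw [div_le_iff₀ (hZpos _)]; exact hZ01
  refine ⟨hZ01', hanti, fun ℓ => ?_⟩
  -- EW and EW2 formulas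
  have hEW : ∀ i ∈ Finset.Icc 1 ℓ, EW cl (θ (i - 1)) (θ i)
      = partZ cl (θ i) / partZ cl (θ (i - 1)) := fun i _ => EW_eq cl _ _
  have hθ2 : ∀ i : ℕ, 1 ≤ i → 2 * θ i - θ (i - 1) = θ (i + 1) := by
    intro i hi
    rw [hθ, hθ, hθ]
    have : ((i - 1 : ℕ) : ℝ) = (i : ℝ) - 1 := by
      have := Nat.cast_sub hi (R := ℝ); simpa using this
    rw [this]
    push_cast
    ring
  have hEW2 : ∀ i : ℕ, 1 ≤ i → EW2 cl (θ (i - 1)) (θ i)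
      = partZ cl (θ (i + 1)) / partZ cl (θ (i - 1)) := by
    intro i hi
    rw [EW2_eq, hθ2 i hi]
  -- telescoping products
  have hprod1 : ∀ m : ℕ, (∏ i ∈ Finset.Icc 1 m, EW cl (θ (i - 1)) (θ i))
      = partZ cl (θ m) / partZ cl (θ 0) := by
    intro m
    induction m with
    | zero => simp [div_self (hZpos (θ 0)).ne']
    | succ m ih =>
      rw [Finset.prod_Icc_succ_top (Nat.le_add_left 1 m), ih, EW_eq]
      have h0 := (hZpos (θ 0)).ne'
      have h1 := (hZpos (θ m)).ne'
      simp only [Nat.add_sub_cancel]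
      field_simp
  have hprod2 : ∀ m : ℕ, (∏ i ∈ Finset.Icc 1 m, EW2 cl (θ (i - 1)) (θ i))
      = partZ cl (θ (m + 1)) * partZ cl (θ m) / (partZ cl (θ 1) * partZ cl (θ 0)) := by
    intro m
    induction m with
    | zero =>
      have h0 := (hZpos (θ 0)).ne'
      have h1 := (hZpos (θ 1)).ne'
      rw [Finset.Icc_eq_empty (by omega), Finset.prod_empty]
      field_simp
    | succ m ih =>
      rw [Finset.prod_Icc_succ_top (Nat.le_add_left 1 m), ih,
        hEW2 (m + 1) (Nat.le_add_left 1 m)]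
      simp only [Nat.add_sub_cancel]
      have h0 := (hZpos (θ 0)).ne'
      have h1 := (hZpos (θ 1)).ne'
      have hm := (hZpos (θ m)).ne'
      field_simp
  constructor
  · rw [hprod1, hprod2]
    have h0 := (hZpos (θ 0)).ne'
    have h1 := (hZpos (θ 1)).ne'
    have hm := (hZpos (θ ℓ)).ne'
    have h2 : ((2:ℝ)) ^ n ≠ 0 := by positivity
    have h4 : ((4:ℝ)) ^ n = ((2:ℝ) ^ n) ^ 2 := by
      rw [sq, ← mul_pow]; norm_num
    rw [h4]
    field_simp
  · have hle : partZ cl (θ (ℓ + 1)) * partZ cl (θ 0)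
        ≤ Real.exp 1 * (partZ cl (θ ℓ) * partZ cl (θ 1)) := by
      have := mul_le_mul (hanti ℓ) hZ01 (le_of_lt (hZpos (θ 0))) (le_of_lt (hZpos (θ ℓ)))
      nlinarith [hZpos (θ 1), hZpos (θ ℓ)]
    have hpos : 0 < partZ cl (θ ℓ) * partZ cl (θ 1) :=
      mul_pos (hZpos _) (hZpos _)
    have : partZ cl (θ (ℓ + 1)) * partZ cl (θ 0) / (partZ cl (θ ℓ) * partZ cl (θ 1))
        ≤ Real.exp 1 := by
      rw [div_le_iff₀ hpos]; exact hle
    linarith
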